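/- Let L > 1, let m ≥ 0 and n ≥ 1 be integers, and let C > 0, α > 0. Let t₀, t₁, …, t_n : Λ × Λ → ℂ be measurable with |t_i(x,x')| ≤ C e^{−α|x−x'|} for all (x,x') ∈ Λ × Λ and each i. Define d_{m,n}(L) := ∫_Λ dx ∫_Λ dy₁ ⋯ ∫_Λ dy_n (i · fl_n(x,y₁,…,y_n))^m · t₀(x,y₁) t₁(y₁,y₂) ⋯ t_{n−1}(y_{n−1},y_n) t_n(y_n,x). Then there exists a constant K > 0 depending only on C, α, m and n (independent of L and of the particular kernels t_i) such that |d_{m,n}(L)| ≤ K L³. -/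

import Mathlib

open MeasureTheory Real

noncomputable section

/-- The open cube `Λ = (−L/2, L/2)³ ⊂ ℝ³`. -/
def cube (L : ℝ) : Set (EuclideanSpace ℝ (Fin 3)) :=
  {x | ∀ i, x i ∈ Set.Ioo (-(L / 2)) (L / 2)}

/-- The magnetic phase `φ(x,x') = (x₂x₁' − x₁x₂')/2`. -/
def phi (x x' : EuclideanSpace ℝ (Fin 3)) : ℝ := (x 1 * x' 0 - x 0 * x' 1) / 2

/-- The closed-polygon phase sum `fl_{n+1}(x,y₁,…,y_{n+1})`, where the `n+1`
points `y₁,…,y_{n+1}` are encoded as `y : Fin (n+1) → ℝ³`: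
`fl_{n+1} = φ(x,y₁) + φ(y₁,y₂) + ⋯ + φ(y_n,y_{n+1}) + φ(y_{n+1},x)`. -/
def fln (n : ℕ) (x : EuclideanSpace ℝ (Fin 3))
    (y : Fin (n + 1) → EuclideanSpace ℝ (Fin 3)) : ℝ :=
  phi x (y 0) + (∑ k : Fin n, phi (y k.castSucc) (y k.succ)) + phi (y (Fin.last n)) x

lemma coord_le_norm (a : EuclideanSpace ℝ (Fin 3)) (i : Fin 3) : |a i| ≤ ‖a‖ := by
  rw [EuclideanSpace.norm_eq]
  have : |a i| = Real.sqrt (‖a i‖ ^ 2) := by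
    rw [Real.sqrt_sq (norm_nonneg _), Real.norm_eq_abs]
  rw [this]
  apply Real.sqrt_le_sqrt
  exact Finset.single_le_sum (f := fun j => ‖a j‖ ^ 2) (fun j _ => sq_nonneg _) (Finset.mem_univ i)

lemma abs_phi_le (a b : EuclideanSpace ℝ (Fin 3)) : |phi a b| ≤ ‖a‖ * ‖b‖ := by
  have h1 : |a 1 * b 0| ≤ ‖a‖ * ‖b‖ := by
    rw [abs_mul]
    exact mul_le_mul (coord_le_norm a 1) (coord_le_norm b 0) (abs_nonneg _) (norm_nonneg _)
  have h0 : |a 0 * b 1| ≤ ‖a‖ * ‖b‖ := by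
    rw [abs_mul]
    exact mul_le_mul (coord_le_norm a 0) (coord_le_norm b 1) (abs_nonneg _) (norm_nonneg _)
  calc |phi a b| ≤ (|a 1 * b 0| + |a 0 * b 1|) / 2 := by
        rw [phi, abs_div]
        simp only [abs_two]
        gcongr
        exact abs_sub _ _
    _ ≤ (‖a‖ * ‖b‖ + ‖a‖ * ‖b‖) / 2 := by gcongr
    _ = ‖a‖ * ‖b‖ := by ring

lemma phi_sub_sub (a b x : EuclideanSpace ℝ (Fin 3)) :
    phi (a - x) (b - x) = phi a b + (phi b x - phi a x) := by
  simp only [phi, PiLp.sub_apply]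
  ring

lemma phi_skew (a b : EuclideanSpace ℝ (Fin 3)) : phi a b = -phi b a := by
  simp only [phi]; ring

lemma fln_eq (n : ℕ) (x : EuclideanSpace ℝ (Fin 3))
    (y : Fin (n + 1) → EuclideanSpace ℝ (Fin 3)) :
    fln n x y = ∑ k : Fin n, phi (y k.castSucc - x) (y k.succ - x) := by
  classical
  set G : ℕ → ℝ := fun i => phi (y ⟨min i n, by omega⟩) x with hG
  have hGval : ∀ i : ℕ, i ≤ n → ∀ h : i < n + 1, G i = phi (y ⟨i, h⟩) x := by
    intro i hi h
    have e : (⟨min i n, by omega⟩ : Fin (n + 1)) = ⟨i, h⟩ := Fin.ext (by simp only [Fin.val_mk, Fin.val_zero, Fin.coe_castSucc, Fin.val_succ]; omega)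
    rw [hG]
    exact congrArg (fun z => phi (y z) x) e
  have hterm : ∀ k : Fin n, phi (y k.castSucc - x) (y k.succ - x)
      = phi (y k.castSucc) (y k.succ) + (G (k.val + 1) - G k.val) := by
    intro k
    rw [phi_sub_sub]
    congr 1
    have h1 : G (k.val + 1) = phi (y k.succ) x := by
      rw [hGval (k.val + 1) (by omega) (by omega)]
      congr 1
    have h2 : G k.val = phi (y k.castSucc) x := by
      rw [hGval k.val (by omega) (by omega)]
      congr 1
    rw [h1, h2]
  rw [Finset.sum_congr rfl fun k _ => hterm k, Finset.sum_add_distrib]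
  have htel : ∑ k : Fin n, (G (k.val + 1) - G k.val) = G n - G 0 := by
    rw [Fin.sum_univ_eq_sum_range (fun i => G (i + 1) - G i) n]
    exact Finset.sum_range_sub G n
  rw [htel]
  have hGn : G n = phi (y (Fin.last n)) x := by
    rw [hGval n (le_refl n) (by omega)]; rfl
  have hG0 : G 0 = phi (y 0) x := by
    rw [hGval 0 (by omega) (by omega)]; rfl
  rw [hGn, hG0, fln, phi_skew x (y 0)]
  ring

lemma chain_bound (n : ℕ) (x : EuclideanSpace ℝ (Fin 3))
    (y : Fin (n + 1) → EuclideanSpace ℝ (Fin 3)) (i : Fin (n + 1)) :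
    ‖y i - x‖ ≤ ‖x - y 0‖ + ∑ k : Fin n, ‖y k.castSucc - y k.succ‖ := by
  set f : ℕ → EuclideanSpace ℝ (Fin 3) := fun j => y ⟨min j n, by omega⟩ with hf
  have hf0 : f 0 = y 0 := by
    have e : (⟨min 0 n, by omega⟩ : Fin (n + 1)) = 0 := Fin.ext (by simp only [Fin.val_mk, Fin.val_zero, Fin.coe_castSucc, Fin.val_succ]; omega)
    rw [hf]
    exact congrArg y e
  have hfi : f i.val = y i := by
    have hi := i.isLt
    have e : (⟨min i.val n, by omega⟩ : Fin (n + 1)) = i := Fin.ext (by simp only [Fin.val_mk, Fin.val_zero, Fin.coe_castSucc, Fin.val_succ]; omega)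
    rw [hf]
    exact congrArg y e
  have hd : dist (y 0) (y i) ≤ ∑ j ∈ Finset.range n, dist (f j) (f (j + 1)) := by
    have h := dist_le_range_sum_dist f i.val
    rw [hf0, hfi] at h
    refine h.trans (Finset.sum_le_sum_of_subset_of_nonneg
      (Finset.range_subset_range.2 (by omega)) fun j _ _ => dist_nonneg)
  have hsum : ∑ j ∈ Finset.range n, dist (f j) (f (j + 1))
      = ∑ k : Fin n, ‖y k.castSucc - y k.succ‖ := by
    rw [← Fin.sum_univ_eq_sum_range (fun j => dist (f j) (f (j + 1))) n]
    refine Finset.sum_congr rfl fun k _ => ?_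
    have hk := k.isLt
    have h1 : f k.val = y k.castSucc := by
      have e : (⟨min k.val n, by omega⟩ : Fin (n + 1)) = k.castSucc := Fin.ext (by simp only [Fin.val_mk, Fin.val_zero, Fin.coe_castSucc, Fin.val_succ]; omega)
      rw [hf]
      exact congrArg y e
    have h2 : f (k.val + 1) = y k.succ := by
      have e : (⟨min (k.val + 1) n, by omega⟩ : Fin (n + 1)) = k.succ := Fin.ext (by simp only [Fin.val_mk, Fin.val_zero, Fin.coe_castSucc, Fin.val_succ]; omega)
      rw [hf]
      exact congrArg y e
    rw [h1, h2, dist_eq_norm]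
  calc ‖y i - x‖ = dist (y i) x := (dist_eq_norm _ _).symm
    _ ≤ dist (y i) (y 0) + dist (y 0) x := dist_triangle _ _ _
    _ = ‖x - y 0‖ + dist (y 0) (y i) := by
        rw [dist_comm (y i) (y 0), dist_comm (y 0) x, dist_eq_norm x (y 0)]; ring
    _ ≤ ‖x - y 0‖ + ∑ k : Fin n, ‖y k.castSucc - y k.succ‖ := by
        rw [hsum] at hd; linarith

lemma poly_exp_le (k : ℕ) {c : ℝ} (hc : 0 < c) {s : ℝ} (hs : 0 ≤ s) :
    s ^ k * Real.exp (-(c * s)) ≤ (k.factorial * (2 / c) ^ k) * Real.exp (-(c / 2 * s)) := by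
  have h1 : (c / 2 * s) ^ k ≤ k.factorial * Real.exp (c / 2 * s) := by
    have h := Real.pow_div_factorial_le_exp (x := c / 2 * s) (by positivity) k
    rw [div_le_iff₀ (by positivity : (0:ℝ) < (k.factorial : ℝ))] at h
    linarith
  have hsk : s ^ k = (c / 2 * s) ^ k * (2 / c) ^ k := by
    rw [← mul_pow]; congr 1; field_simp
  have hexp : Real.exp (c / 2 * s) * Real.exp (-(c * s)) = Real.exp (-(c / 2 * s)) := by
    rw [← Real.exp_add]; congr 1; ring
  calc s ^ k * Real.exp (-(c * s))
      = (c / 2 * s) ^ k * Real.exp (-(c * s)) * (2 / c) ^ k := by rw [hsk]; ring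
    _ ≤ (k.factorial * Real.exp (c / 2 * s)) * Real.exp (-(c * s)) * (2 / c) ^ k := by
        gcongr
    _ = (k.factorial * (2 / c) ^ k) * (Real.exp (c / 2 * s) * Real.exp (-(c * s))) := by ring
    _ = (k.factorial * (2 / c) ^ k) * Real.exp (-(c / 2 * s)) := by rw [hexp]

lemma integrable_exp_neg_norm {γ : ℝ} (hγ : 0 < γ) :
    Integrable (fun u : EuclideanSpace ℝ (Fin 3) => Real.exp (-(γ * ‖u‖))) := by
  have h4 : (Module.finrank ℝ (EuclideanSpace ℝ (Fin 3)) : ℝ) < 4 := by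
    rw [finrank_euclideanSpace_fin]; norm_num
  have hint : Integrable (fun x : EuclideanSpace ℝ (Fin 3) => (1 + ‖x‖) ^ (-(4:ℝ))) volume :=
    integrable_one_add_norm h4
  refine (hint.const_mul ((24 : ℝ) * Real.exp γ / γ ^ 4)).mono'
    (Continuous.aestronglyMeasurable (by continuity)) ?_
  filter_upwards with u
  rw [Real.norm_eq_abs, abs_of_pos (Real.exp_pos _)]
  set t := ‖u‖ with ht'
  have ht : 0 ≤ t := norm_nonneg _
  have hA : (0:ℝ) < Real.exp (γ * t) := Real.exp_pos _
  have hB : (0:ℝ) < (1 + t) ^ (4:ℕ) := by positivity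
  have key : (γ * (1 + t)) ^ (4:ℕ) / 24 ≤ Real.exp γ * Real.exp (γ * t) := by
    have h := Real.pow_div_factorial_le_exp (x := γ * (1 + t)) (by positivity) 4
    rw [show γ * (1 + t) = γ + γ * t from by ring, Real.exp_add] at h
    have h24 : ((4:ℕ).factorial : ℝ) = 24 := by norm_num [Nat.factorial]
    rw [h24] at h
    rw [show γ * (1 + t) = γ + γ * t from by ring]
    exact h
  have hpow : (1 + t) ^ (-(4:ℝ)) = ((1 + t) ^ (4:ℕ))⁻¹ := by
    rw [← Real.rpow_natCast (1 + t) 4, ← Real.rpow_neg (by positivity)]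
    norm_num
  rw [hpow, ← div_eq_mul_inv, le_div_iff₀ hB, Real.exp_neg, inv_mul_eq_div,
    div_le_div_iff₀ hA (by positivity : (0:ℝ) < γ ^ 4)]
  nlinarith [key, mul_pow γ (1 + t) 4, Real.exp_pos γ]

lemma cube_measurableSet (L : ℝ) : MeasurableSet (cube L) := by
  have : cube L = ⋂ i : Fin 3,
      (fun x : EuclideanSpace ℝ (Fin 3) => x i) ⁻¹' (Set.Ioo (-(L/2)) (L/2)) := by
    ext x; simp [cube]
  rw [this]
  exact MeasurableSet.iInter fun i =>
    ((measurable_pi_apply i).comp (WithLp.measurable_ofLp (p := 2) (X := Fin 3 → ℝ))) measurableSet_Ioo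

lemma volume_cube {L : ℝ} (hL : 0 < L) : volume (cube L) = ENNReal.ofReal L ^ 3 := by
  have heq : cube L = ((MeasurableEquiv.toLp 2 (Fin 3 → ℝ)).symm) ⁻¹'
      (Set.pi Set.univ fun _ : Fin 3 => Set.Ioo (-(L/2)) (L/2)) := by
    ext x
    simp [cube, MeasurableEquiv.coe_toLp_symm, Set.mem_pi]
  rw [heq, (EuclideanSpace.volume_preserving_symm_measurableEquiv_toLp (Fin 3)).measure_preimage_equiv,
    volume_pi_pi, Real.volume_Ioo]
  rw [Finset.prod_const, Finset.card_univ, Fintype.card_fin]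
  congr 1
  rw [show L / 2 - -(L/2) = L from by ring]

/-- For kernels `t₀,…,t_{n+1}` bounded by `C e^{−α|x−x'|}` on `Λ × Λ`, the quantity
`d_{m,n+1}(L) = ∫_Λ dx ∫_{Λ^{n+1}} dy (i fl_{n+1}(x,y))^m t₀(x,y₁) t₁(y₁,y₂) ⋯
t_{n+1}(y_{n+1},x)` satisfies `|d_{m,n+1}(L)| ≤ K L³` with `K` depending only on
`C, α, m, n` (independent of `L` and of the kernels). This covers every number
`n+1 ≥ 1` of intermediate points. -/
theorem volume_bound_flux_integral (C α : ℝ) (hC : 0 < C) (hα : 0 < α)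
    (m n : ℕ) :
    ∃ K : ℝ, 0 < K ∧ ∀ L : ℝ, 1 < L →
      ∀ t : Fin (n + 2) → EuclideanSpace ℝ (Fin 3) → EuclideanSpace ℝ (Fin 3) → ℂ,
        (∀ i, Measurable (Function.uncurry (t i))) →
        (∀ i, ∀ x ∈ cube L, ∀ x' ∈ cube L,
          ‖t i x x'‖ ≤ C * Real.exp (-α * ‖x - x'‖)) →
        ‖∫ x in cube L,
            ∫ y in Set.pi Set.univ (fun _ : Fin (n + 1) => cube L),
              (Complex.I * (fln n x y : ℝ)) ^ m *
                (t 0 x (y 0) *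
                  (∏ k : Fin n, t k.succ.castSucc (y k.castSucc) (y k.succ)) *
                  t (Fin.last (n + 1)) (y (Fin.last n)) x)‖ ≤ K * L ^ 3 := by
  set β : ℝ := α / ((n : ℝ) + 1) with hβ
  have hβpos : 0 < β := by positivity
  set γ : ℝ := β / 2 with hγ
  have hγpos : 0 < γ := by positivity
  set M : ℝ := (((2 * m).factorial : ℝ) * (2 / β) ^ (2 * m)) with hM
  have hMpos : 0 < M := by positivity
  have hgint : Integrable (fun u : EuclideanSpace ℝ (Fin 3) => Real.exp (-(γ * ‖u‖))) :=
    integrable_exp_neg_norm hγpos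
  set A : ℝ := ∫ u : EuclideanSpace ℝ (Fin 3), Real.exp (-(γ * ‖u‖)) with hA
  have hAnn : 0 ≤ A := integral_nonneg fun u => (Real.exp_pos _).le
  set D : ℝ := C ^ (n + 2) * M * A ^ (n + 1) with hD
  have hDnn : 0 ≤ D := by positivity
  refine ⟨D + 1, by positivity, ?_⟩
  intro L hL t ht htb
  have hL0 : (0 : ℝ) < L := by linarith
  have hcm : MeasurableSet (cube L) := cube_measurableSet L
  have hSm : MeasurableSet (Set.pi Set.univ fun _ : Fin (n + 1) => cube L) :=
    MeasurableSet.univ_pi fun _ => hcm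
  -- the dominating function for fixed x
  set B : EuclideanSpace ℝ (Fin 3) → (Fin (n + 1) → EuclideanSpace ℝ (Fin 3)) → ℝ :=
    fun x y => C ^ (n + 2) * M * ∏ i : Fin (n + 1), Real.exp (-(γ * ‖y i - x‖)) with hB
  have hBint : ∀ x, Integrable (B x) := by
    intro x
    refine Integrable.const_mul ?_ _
    exact Integrable.fintype_prod
      (f := fun (_ : Fin (n + 1)) (u : EuclideanSpace ℝ (Fin 3)) => Real.exp (-(γ * ‖u - x‖)))
      (fun _ => hgint.comp_sub_right x)
  have hBval : ∀ x, (∫ y, B x y) = D := by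
    intro x
    rw [hB]
    rw [integral_const_mul]
    rw [integral_fintype_prod_volume_eq_prod (ι := Fin (n + 1))
      (f := fun (_ : Fin (n + 1)) (u : EuclideanSpace ℝ (Fin 3)) => Real.exp (-(γ * ‖u - x‖)))]
    have : (∫ u : EuclideanSpace ℝ (Fin 3), Real.exp (-(γ * ‖u - x‖))) = A := by
      rw [hA]
      exact integral_sub_right_eq_self (fun u => Real.exp (-(γ * ‖u‖))) x
    rw [this, Finset.prod_const, Finset.card_univ, Fintype.card_fin, hD]
  -- pointwise bound
  have hpoint : ∀ x ∈ cube L, ∀ y : Fin (n + 1) → EuclideanSpace ℝ (Fin 3),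
      (∀ i, y i ∈ cube L) →
      ‖(Complex.I * (fln n x y : ℝ)) ^ m *
        (t 0 x (y 0) *
          (∏ k : Fin n, t k.succ.castSucc (y k.castSucc) (y k.succ)) *
          t (Fin.last (n + 1)) (y (Fin.last n)) x)‖ ≤ B x y := by
    intro x hx y hy
    set T : ℝ := ∑ i : Fin (n + 1), ‖y i - x‖ with hT
    have hTnn : 0 ≤ T := Finset.sum_nonneg fun i _ => norm_nonneg _
    set S : ℝ := ‖x - y 0‖ + ∑ k : Fin n, ‖y k.castSucc - y k.succ‖ with hS
    have hSsum_nn : 0 ≤ ∑ k : Fin n, ‖y k.castSucc - y k.succ‖ :=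
      Finset.sum_nonneg fun k _ => norm_nonneg _
    have hSnn : 0 ≤ S := by rw [hS]; positivity
    have hfl : |fln n x y| ≤ T ^ 2 := by
      rw [fln_eq]
      have hsucc_le : ∀ k : Fin n, ‖y k.succ - x‖ ≤ T := fun k =>
        Finset.single_le_sum (f := fun i : Fin (n + 1) => ‖y i - x‖)
          (fun i _ => norm_nonneg _) (Finset.mem_univ k.succ)
      have hcast_le : (∑ k : Fin n, ‖y k.castSucc - x‖) ≤ T := by
        rw [hT, Fin.sum_univ_castSucc (f := fun i : Fin (n + 1) => ‖y i - x‖)]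
        exact le_add_of_nonneg_right (norm_nonneg _)
      calc |∑ k : Fin n, phi (y k.castSucc - x) (y k.succ - x)|
          ≤ ∑ k : Fin n, |phi (y k.castSucc - x) (y k.succ - x)| :=
            Finset.abs_sum_le_sum_abs _ _
        _ ≤ ∑ k : Fin n, ‖y k.castSucc - x‖ * T := by
            refine Finset.sum_le_sum fun k _ => ?_
            exact le_trans (abs_phi_le _ _)
              (mul_le_mul_of_nonneg_left (hsucc_le k) (norm_nonneg _))
        _ = (∑ k : Fin n, ‖y k.castSucc - x‖) * T := (Finset.sum_mul _ _ _).symm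
        _ ≤ T * T := mul_le_mul_of_nonneg_right hcast_le hTnn
        _ = T ^ 2 := (sq T).symm
    have hTS : T ≤ ((n : ℝ) + 1) * S := by
      calc T ≤ ∑ _i : Fin (n + 1), S := Finset.sum_le_sum fun i _ => chain_bound n x y i
        _ = ((n : ℝ) + 1) * S := by
            rw [Finset.sum_const, Finset.card_univ, Fintype.card_fin, nsmul_eq_mul]
            push_cast; ring
    have hk0 : ‖t 0 x (y 0)‖ ≤ C * Real.exp (-α * ‖x - y 0‖) := htb 0 x hx (y 0) (hy 0)
    have hkk : ∀ k : Fin n, ‖t k.succ.castSucc (y k.castSucc) (y k.succ)‖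
        ≤ C * Real.exp (-α * ‖y k.castSucc - y k.succ‖) := fun k =>
      htb _ _ (hy _) _ (hy _)
    have hkl : ‖t (Fin.last (n + 1)) (y (Fin.last n)) x‖ ≤ C := by
      refine (htb _ _ (hy _) x hx).trans ?_
      have h1 : Real.exp (-α * ‖y (Fin.last n) - x‖) ≤ 1 := by
        rw [Real.exp_le_one_iff]
        nlinarith [norm_nonneg (y (Fin.last n) - x)]
      nlinarith
    have hprod : (∏ k : Fin n, ‖t k.succ.castSucc (y k.castSucc) (y k.succ)‖)
        ≤ C ^ n * Real.exp (∑ k : Fin n, -α * ‖y k.castSucc - y k.succ‖) := by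
      calc (∏ k : Fin n, ‖t k.succ.castSucc (y k.castSucc) (y k.succ)‖)
          ≤ ∏ k : Fin n, (C * Real.exp (-α * ‖y k.castSucc - y k.succ‖)) :=
            Finset.prod_le_prod (fun k _ => norm_nonneg _) (fun k _ => hkk k)
        _ = C ^ n * Real.exp (∑ k : Fin n, -α * ‖y k.castSucc - y k.succ‖) := by
            rw [Finset.prod_mul_distrib, Finset.prod_const, Finset.card_univ,
              Fintype.card_fin, ← Real.exp_sum]
    have hP : ‖t 0 x (y 0)‖ *
        (∏ k : Fin n, ‖t k.succ.castSucc (y k.castSucc) (y k.succ)‖) *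
        ‖t (Fin.last (n + 1)) (y (Fin.last n)) x‖
        ≤ C ^ (n + 2) * Real.exp (-(α * S)) := by
      have hcomb : (C * Real.exp (-α * ‖x - y 0‖)) *
          (C ^ n * Real.exp (∑ k : Fin n, -α * ‖y k.castSucc - y k.succ‖)) * C
          = C ^ (n + 2) * Real.exp (-(α * S)) := by
        have hsum : -α * ‖x - y 0‖ + (∑ k : Fin n, -α * ‖y k.castSucc - y k.succ‖)
            = -(α * S) := by
          rw [hS, ← Finset.mul_sum]; ring
        rw [show (C * Real.exp (-α * ‖x - y 0‖)) *
            (C ^ n * Real.exp (∑ k : Fin n, -α * ‖y k.castSucc - y k.succ‖)) * C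
            = C ^ (n + 2) * (Real.exp (-α * ‖x - y 0‖) *
              Real.exp (∑ k : Fin n, -α * ‖y k.castSucc - y k.succ‖)) from by ring,
          ← Real.exp_add, hsum]
      rw [← hcomb]
      refine mul_le_mul (mul_le_mul hk0 hprod (Finset.prod_nonneg fun k _ => norm_nonneg _)
        (by positivity)) hkl (norm_nonneg _) (by positivity)
    rw [norm_mul, norm_pow, norm_mul, Complex.norm_I, one_mul, Complex.norm_real,
      Real.norm_eq_abs, norm_mul, norm_mul, norm_prod]
    have hexpST : Real.exp (-(α * S)) ≤ Real.exp (-(β * T)) := by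
      rw [Real.exp_le_exp]
      have h5 : β * T ≤ α * S := by
        calc β * T ≤ β * (((n : ℝ) + 1) * S) := mul_le_mul_of_nonneg_left hTS hβpos.le
          _ = α * S := by rw [hβ]; field_simp
      linarith
    have hpoly : T ^ (2 * m) * Real.exp (-(β * T)) ≤ M * Real.exp (-(γ * T)) := by
      have := poly_exp_le (2 * m) hβpos hTnn
      rw [hM, hγ]
      exact this
    have hprodexp : (∏ i : Fin (n + 1), Real.exp (-(γ * ‖y i - x‖)))
        = Real.exp (-(γ * T)) := by
      rw [← Real.exp_sum]
      congr 1
      rw [hT, Finset.mul_sum]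
      rw [← Finset.sum_neg_distrib]
    calc |fln n x y| ^ m * (‖t 0 x (y 0)‖ *
          (∏ k : Fin n, ‖t k.succ.castSucc (y k.castSucc) (y k.succ)‖) *
          ‖t (Fin.last (n + 1)) (y (Fin.last n)) x‖)
        ≤ (T ^ 2) ^ m * (C ^ (n + 2) * Real.exp (-(α * S))) := by
          refine mul_le_mul (pow_le_pow_left₀ (abs_nonneg _) hfl m) hP ?_ (by positivity)
          positivity
      _ = C ^ (n + 2) * (T ^ (2 * m) * Real.exp (-(α * S))) := by
          rw [pow_mul]; ring
      _ ≤ C ^ (n + 2) * (T ^ (2 * m) * Real.exp (-(β * T))) := by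
          refine mul_le_mul_of_nonneg_left ?_ (by positivity)
          exact mul_le_mul_of_nonneg_left hexpST (by positivity)
      _ ≤ C ^ (n + 2) * (M * Real.exp (-(γ * T))) :=
          mul_le_mul_of_nonneg_left hpoly (by positivity)
      _ = B x y := by simp only [hB]; rw [hprodexp]; ring
  -- inner integral bound
  have hinner : ∀ x ∈ cube L,
      ‖∫ y in Set.pi Set.univ (fun _ : Fin (n + 1) => cube L),
          (Complex.I * (fln n x y : ℝ)) ^ m *
            (t 0 x (y 0) *
              (∏ k : Fin n, t k.succ.castSucc (y k.castSucc) (y k.succ)) *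
              t (Fin.last (n + 1)) (y (Fin.last n)) x)‖ ≤ D := by
    intro x hx
    refine le_trans (norm_integral_le_integral_norm _) ?_
    have step1 : (∫ y in Set.pi Set.univ (fun _ : Fin (n + 1) => cube L),
        ‖(Complex.I * (fln n x y : ℝ)) ^ m *
          (t 0 x (y 0) *
            (∏ k : Fin n, t k.succ.castSucc (y k.castSucc) (y k.succ)) *
            t (Fin.last (n + 1)) (y (Fin.last n)) x)‖)
        ≤ ∫ y in Set.pi Set.univ (fun _ : Fin (n + 1) => cube L), B x y := by
      refine integral_mono_of_nonneg (Filter.Eventually.of_forall fun y => norm_nonneg _)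
        ((hBint x).integrableOn) ?_
      filter_upwards [ae_restrict_mem hSm] with y hy
      exact hpoint x hx y (fun i => hy i (Set.mem_univ i))
    have step2 : (∫ y in Set.pi Set.univ (fun _ : Fin (n + 1) => cube L), B x y)
        ≤ ∫ y, B x y :=
      setIntegral_le_integral (hBint x)
        (Filter.Eventually.of_forall fun y => by positivity)
    calc _ ≤ _ := step1
      _ ≤ _ := step2
      _ = D := hBval x
  -- outer integral
  have houter : ‖∫ x in cube L,
      ∫ y in Set.pi Set.univ (fun _ : Fin (n + 1) => cube L),
        (Complex.I * (fln n x y : ℝ)) ^ m *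
          (t 0 x (y 0) *
            (∏ k : Fin n, t k.succ.castSucc (y k.castSucc) (y k.succ)) *
            t (Fin.last (n + 1)) (y (Fin.last n)) x)‖ ≤ D * L ^ 3 := by
    refine le_trans (norm_integral_le_integral_norm _) ?_
    have hvol : volume (cube L) = ENNReal.ofReal L ^ 3 := volume_cube hL0
    have hfin : volume (cube L) < ⊤ := by
      rw [hvol]; exact ENNReal.pow_lt_top ENNReal.ofReal_lt_top
    have step1 : (∫ x in cube L, ‖∫ y in Set.pi Set.univ (fun _ : Fin (n + 1) => cube L),
        (Complex.I * (fln n x y : ℝ)) ^ m *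
          (t 0 x (y 0) *
            (∏ k : Fin n, t k.succ.castSucc (y k.castSucc) (y k.succ)) *
            t (Fin.last (n + 1)) (y (Fin.last n)) x)‖)
        ≤ ∫ _x in cube L, D := by
      refine integral_mono_of_nonneg (Filter.Eventually.of_forall fun x => norm_nonneg _)
        (integrableOn_const hfin.ne) ?_
      filter_upwards [ae_restrict_mem hcm] with x hx
      exact hinner x hx
    refine step1.trans ?_
    rw [setIntegral_const, measureReal_def, hvol]
    rw [smul_eq_mul]
    have : ((ENNReal.ofReal L ^ 3).toReal) = L ^ 3 := by
      rw [ENNReal.toReal_pow, ENNReal.toReal_ofReal hL0.le]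
    rw [this, mul_comm]
  refine houter.trans ?_
  have : (0:ℝ) < L ^ 3 := by positivity
  nlinarith
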